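/- arXiv:2003.04254 — 3 statements merged into one kernel-verified Lean document; each statement's English description precedes it below -/
import Mathlib

section
/- Let G be a finite simple graph and let S ⊆ V(G) be a vertex cover of G. If G admits a b-coloring with k colors, then k ≤ |S| + 1. -/
/-- `G` admits a `b`-coloring with `k` colors: a proper coloring with colors `Fin k`
such that every color `i` has a `b`-vertex. -/
def SimpleGraph.HasBColoring {α : Type*} (G : SimpleGraph α) (k : ℕ) : Prop :=
  ∃ c : α → Fin k,
    (∀ u v, G.Adj u v → c u ≠ c v) ∧
    ∀ i : Fin k, ∃ v, c v = i ∧ ∀ j : Fin k, j ≠ i → ∃ u, G.Adj v u ∧ c u = j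

/-- If `S` is a vertex cover of a finite simple graph `G` and `G` admits a `b`-coloring
with `k` colors, then `k ≤ |S| + 1`. -/
theorem bColoring_le_vertexCover_add_one {V : Type*} [Fintype V] [DecidableEq V]
    (G : SimpleGraph V) (S : Set V)
    (hS : ∀ u v, G.Adj u v → u ∈ S ∨ v ∈ S)
    (k : ℕ) (h : G.HasBColoring k) :
    k ≤ S.ncard + 1 := by
  by_contra hlt
  push_neg at hlt
  obtain ⟨c, hproper, hb⟩ := h
  -- colors used on S
  set T : Set (Fin k) := c '' S with hT
  have hTfin : T.Finite := (S.toFinite).image c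
  have hTcard : T.ncard ≤ S.ncard := Set.ncard_image_le S.toFinite
  -- complement has at least 2 elements
  have hcompl : 1 < Tᶜ.ncard := by
    have h1 : T.ncard + Tᶜ.ncard = k := by
      have := Set.ncard_add_ncard_compl T
      simpa using this
    omega
  obtain ⟨i, j, hi, hj, hij⟩ := (Set.one_lt_ncard_iff Tᶜ.toFinite).mp hcompl
  obtain ⟨v, hvc, hv⟩ := hb i
  obtain ⟨u, hadj, huc⟩ := hv j (by simpa using Ne.symm hij)
  rcases hS v u hadj with hs | hs
  · exact hi ⟨v, hs, hvc⟩
  · exact hj ⟨u, hs, huc⟩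
end

section
/- Let G be a finite simple graph, S ⊆ V(G) a vertex cover of G, k ≥ 1 an integer, W a set with S ⊆ W ⊆ V(G), φ : W → {1,…,k} a proper partial coloring of G, and B ⊆ S with |B| ≤ k. If there exists a proper partial coloring of G extending φ that satisfies the (x,c)-need for every pair (x,c) with x ∈ B and c ∈ {1,…,k} a color not assigned by φ to any neighbor of x, then there exists a small extension of φ (a proper partial coloring extending φ whose domain contains at most k² − k vertices outside the domain of φ) that also satisfies all these (x,c)-needs. -/
/-- `φ` is a proper partial coloring of `G` with colors `Fin k` (domain = support). -/
def ProperPartial {V : Type*} {k : ℕ} (G : SimpleGraph V) (φ : V → Option (Fin k)) : Prop :=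
  ∀ u v, G.Adj u v → ∀ c : Fin k, φ u = some c → φ v ≠ some c

/-- `φ'` extends the partial coloring `φ`. -/
def ExtendsPartial {V : Type*} {k : ℕ} (φ φ' : V → Option (Fin k)) : Prop :=
  ∀ v c, φ v = some c → φ' v = some c

/-- `φ'` satisfies the `(x, c)`-need: some neighbor of `x` is assigned color `c`. -/
def SatisfiesNeed {V : Type*} {k : ℕ} (G : SimpleGraph V)
    (φ' : V → Option (Fin k)) (x : V) (c : Fin k) : Prop :=
  ∃ y, G.Adj x y ∧ φ' y = some c

/-- Observation: let `G` be a finite simple graph, `S` a vertex cover of `G`, `k ≥ 1`,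
`φ` a proper partial coloring of `G` with `k` colors whose domain `W` contains `S`, and
`B ⊆ S` with `|B| ≤ k`. If some proper partial coloring extending `φ` satisfies the
`(x, c)`-need for every `x ∈ B` and every color `c` not assigned by `φ` to any neighbor
of `x`, then some small extension of `φ` (a proper partial coloring extending `φ` which
colors at most `k² − k` vertices outside the domain of `φ`) also satisfies all these
needs. -/
theorem small_extension_suffices {V : Type*} [Fintype V] [DecidableEq V]
    (G : SimpleGraph V) (S : Set V)
    (hS : ∀ u v, G.Adj u v → u ∈ S ∨ v ∈ S)
    (k : ℕ) (hk : 1 ≤ k)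
    (φ : V → Option (Fin k))
    (hdom : ∀ v ∈ S, φ v ≠ none)
    (hφ : ProperPartial G φ)
    (B : Set V) (hB : B ⊆ S) (hBcard : B.ncard ≤ k)
    (hex : ∃ φ' : V → Option (Fin k), ProperPartial G φ' ∧ ExtendsPartial φ φ' ∧
      ∀ x ∈ B, ∀ c : Fin k, ¬ (∃ y, G.Adj x y ∧ φ y = some c) →
        SatisfiesNeed G φ' x c) :
    ∃ φ' : V → Option (Fin k), ProperPartial G φ' ∧ ExtendsPartial φ φ' ∧
      {v | φ v = none ∧ φ' v ≠ none}.ncard ≤ k ^ 2 - k ∧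
      ∀ x ∈ B, ∀ c : Fin k, ¬ (∃ y, G.Adj x y ∧ φ y = some c) →
        SatisfiesNeed G φ' x c := by
  classical
  obtain ⟨ψ, hψp, hψe, hψn⟩ := hex
  set c0 : V → Fin k := fun x => (φ x).getD ⟨0, hk⟩ with hc0
  set P : Set (V × Fin k) := {p | p.1 ∈ B ∧ ¬ ∃ y, G.Adj p.1 y ∧ φ y = some p.2} with hP
  have hw : ∀ p : V × Fin k, ∃ y, p ∈ P → G.Adj p.1 y ∧ ψ y = some p.2 := by
    intro p
    by_cases hp : p ∈ P
    · obtain ⟨y, h1, h2⟩ := hψn p.1 hp.1 p.2 hp.2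
      exact ⟨y, fun _ => ⟨h1, h2⟩⟩
    · exact ⟨p.1, fun h => absurd h hp⟩
  choose w hw' using hw
  have hw1 : ∀ p ∈ P, G.Adj p.1 (w p) := fun p hp => (hw' p hp).1
  have hw2 : ∀ p ∈ P, ψ (w p) = some p.2 := fun p hp => (hw' p hp).2
  set T : Set V := w '' P with hT
  refine ⟨fun v => if φ v ≠ none ∨ v ∈ T then ψ v else none, ?_, ?_, ?_, ?_⟩
  · intro u v huv c hu hv
    by_cases h1 : φ u ≠ none ∨ u ∈ T
    · by_cases h2 : φ v ≠ none ∨ v ∈ T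
      · simp only [h1, h2, if_pos] at hu hv
        exact hψp u v huv c hu hv
      · simp [h2] at hv
    · simp [h1] at hu
  · intro v c hv
    have : φ v ≠ none := by simp [hv]
    show (if φ v ≠ none ∨ v ∈ T then ψ v else none) = some c
    rw [if_pos (Or.inl this)]
    exact hψe v c hv
  · -- cardinality bound
    have hsub : {v | φ v = none ∧ (if φ v ≠ none ∨ v ∈ T then ψ v else none) ≠ none} ⊆ T := by
      intro v hv
      obtain ⟨h1, h2⟩ := hv
      by_cases h3 : φ v ≠ none ∨ v ∈ T
      · rcases h3 with h3 | h3
        · exact absurd h1 h3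
        · exact h3
      · simp [h3] at h2
    have hPfin : P.Finite := Set.toFinite _
    have hBfin : B.Finite := Set.toFinite _
    -- key: for x ∈ B, (x, c0 x) ∉ P
    have hkey : ∀ x ∈ B, (x, c0 x) ∉ P := by
      intro x hx hmem
      have hφx : φ x = some (c0 x) := by
        have := hdom x (hB hx)
        cases hφx : φ x with
        | none => exact absurd hφx this
        | some c => simp [hc0, hφx]
      obtain ⟨y, hy1, hy2⟩ := hψn x hx (c0 x) hmem.2
      exact hψp x y hy1 (c0 x) (hψe x (c0 x) hφx) hy2
    have hPsub : hPfin.toFinset ⊆ hBfin.toFinset.biUnion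
        (fun x => ({x} : Finset V) ×ˢ ({c0 x}ᶜ : Finset (Fin k))) := by
      intro p hp
      rw [Set.Finite.mem_toFinset] at hp
      simp only [Finset.mem_biUnion, Finset.mem_product, Finset.mem_singleton,
        Finset.mem_compl, Set.Finite.mem_toFinset]
      obtain ⟨x, c⟩ := p
      refine ⟨x, hp.1, rfl, ?_⟩
      intro hc
      exact hkey x hp.1 (hc ▸ hp)
    have hPcard : P.ncard ≤ k ^ 2 - k := by
      rw [Set.ncard_eq_toFinset_card P hPfin]
      calc hPfin.toFinset.card
          ≤ (hBfin.toFinset.biUnion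
            (fun x => ({x} : Finset V) ×ˢ ({c0 x}ᶜ : Finset (Fin k)))).card :=
            Finset.card_le_card hPsub
        _ ≤ ∑ x ∈ hBfin.toFinset, (({x} : Finset V) ×ˢ ({c0 x}ᶜ : Finset (Fin k))).card :=
            Finset.card_biUnion_le
        _ = ∑ x ∈ hBfin.toFinset, (k - 1) := by
            apply Finset.sum_congr rfl
            intro x _
            simp [Finset.card_product, Finset.card_compl]
        _ = hBfin.toFinset.card * (k - 1) := by
            rw [Finset.sum_const, smul_eq_mul]
        _ ≤ k * (k - 1) := by
            apply Nat.mul_le_mul_right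
            have : B.ncard = hBfin.toFinset.card := Set.ncard_eq_toFinset_card B hBfin
            omega
        _ = k ^ 2 - k := by
            obtain ⟨m, rfl⟩ := Nat.exists_eq_add_of_le hk
            simp [pow_two]
            ring_nf
            omega
    calc {v | φ v = none ∧ (if φ v ≠ none ∨ v ∈ T then ψ v else none) ≠ none}.ncard
        ≤ T.ncard := Set.ncard_le_ncard hsub (Set.toFinite _)
      _ ≤ P.ncard := Set.ncard_image_le (Set.toFinite _)
      _ ≤ k ^ 2 - k := hPcard
  · intro x hx c hc
    have hmem : (x, c) ∈ P := ⟨hx, hc⟩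
    refine ⟨w (x, c), hw1 _ hmem, ?_⟩
    have hTy : w (x, c) ∈ T := ⟨_, hmem, rfl⟩
    simp only [hTy, or_true, if_pos]
    exact hw2 _ hmem
end

section
/- Let G be a finite simple graph, let S ⊆ V(G) be a vertex cover of G, let k ≥ 1, and let X ⊆ V(G) \ S be a set of at least k + 1 vertices all having the same open neighborhood in G (i.e., N_G(u) = N_G(v) for all u, v ∈ X). Then for any x ∈ X, the graph G admits a b-coloring with k colors if and only if the induced subgraph G − x (on vertex set V(G) \ {x}) admits a b-coloring with k colors. -/
/-- Let `G` be a finite simple graph, `S` a vertex cover of `G`, `k ≥ 1`, and `X` a set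
of at least `k + 1` vertices outside of `S` all having the same open neighborhood in
`G`. Then for any `x ∈ X`, `G` admits a `b`-coloring with `k` colors if and only if
`G − x` does. -/
theorem hasBColoring_iff_deleteVert {V : Type*} [Fintype V] [DecidableEq V]
    (G : SimpleGraph V) (S : Set V)
    (hS : ∀ u v, G.Adj u v → u ∈ S ∨ v ∈ S)
    (k : ℕ) (hk : 1 ≤ k)
    (X : Set V) (hXS : X ⊆ Sᶜ) (hXcard : k + 1 ≤ X.ncard)
    (hXnbhd : ∀ u ∈ X, ∀ v ∈ X, G.neighborSet u = G.neighborSet v)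
    (x : V) (hx : x ∈ X) :
    G.HasBColoring k ↔ (G.induce {x}ᶜ).HasBColoring k := by
  classical
  have hAdj : ∀ u ∈ X, ∀ w, G.Adj u w ↔ G.Adj x w := by
    intro u hu w
    have h := hXnbhd u hu x hx
    simpa using Set.ext_iff.mp h w
  -- key: restriction works given a twin of x's color
  have key : ∀ c : V → Fin k, (∀ u v, G.Adj u v → c u ≠ c v) →
      (∀ i : Fin k, ∃ v, c v = i ∧ ∀ j : Fin k, j ≠ i → ∃ u, G.Adj v u ∧ c u = j) →
      ∀ y ∈ X, y ≠ x → c y = c x → (G.induce {x}ᶜ).HasBColoring k := by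
    intro c hc hb y hyX hyx hcy
    refine ⟨fun v => c v, ?_, ?_⟩
    · rintro ⟨u, hu⟩ ⟨v, hv⟩ h
      exact hc u v h
    · intro i
      obtain ⟨v, hv, hw⟩ := hb i
      by_cases hvx : v = x
      · refine ⟨⟨y, Set.mem_compl_singleton_iff.mpr hyx⟩, by show c y = i; rw [hcy, ← hvx]; exact hv, ?_⟩
        intro j hj
        obtain ⟨u, hadj, hu⟩ := hw j hj
        rw [hvx] at hadj
        have hux : u ≠ x := fun h => G.irrefl (h ▸ hadj)
        exact ⟨⟨u, Set.mem_compl_singleton_iff.mpr hux⟩,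
          by simpa using (hAdj y hyX u).mpr hadj, hu⟩
      · refine ⟨⟨v, Set.mem_compl_singleton_iff.mpr hvx⟩, hv, ?_⟩
        intro j hj
        obtain ⟨u, hadj, hu⟩ := hw j hj
        by_cases hux : u = x
        · rw [hux] at hadj hu
          refine ⟨⟨y, Set.mem_compl_singleton_iff.mpr hyx⟩, ?_, ?_⟩
          · have h1 : G.Adj y v := (hAdj y hyX v).mpr hadj.symm
            simpa using h1.symm
          · show c y = j
            rw [hcy]; exact hu
        · exact ⟨⟨u, Set.mem_compl_singleton_iff.mpr hux⟩, by simpa using hadj, hu⟩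
  constructor
  · rintro ⟨c, hc, hb⟩
    by_cases htwin : ∃ y ∈ X, y ≠ x ∧ c y = c x
    · obtain ⟨y, hyX, hyx, hcy⟩ := htwin
      exact key c hc hb y hyX hyx hcy
    · push_neg at htwin
      have hfin : (X \ {x}).Finite := Set.toFinite _
      have hcard : k ≤ (X \ {x}).ncard := by
        have h1 := Set.ncard_diff_singleton_of_mem hx
        omega
      obtain ⟨y, hy, z, hz, hyz, hcyz⟩ :
          ∃ y ∈ X \ {x}, ∃ z ∈ X \ {x}, y ≠ z ∧ c y = c z := by
        have hmaps : ∀ a ∈ hfin.toFinset, c a ∈ Finset.univ.erase (c x) := by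
          intro a ha
          rw [Set.Finite.mem_toFinset] at ha
          exact Finset.mem_erase.mpr ⟨htwin a ha.1 ha.2, Finset.mem_univ _⟩
        have hsc : hfin.toFinset.card = (X \ {x}).ncard :=
          (Set.ncard_eq_toFinset_card _ hfin).symm
        have hlt : (Finset.univ.erase (c x)).card < hfin.toFinset.card := by
          rw [Finset.card_erase_of_mem (Finset.mem_univ _), Finset.card_univ,
            Fintype.card_fin, hsc]
          omega
        obtain ⟨a, ha, b, hb', hab, hcab⟩ :=
          Finset.exists_ne_map_eq_of_card_lt_of_maps_to hlt hmaps
        rw [Set.Finite.mem_toFinset] at ha hb'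
        exact ⟨a, ha, b, hb', hab, hcab⟩
      obtain ⟨hyX, hyx'⟩ := hy
      obtain ⟨hzX, hzx'⟩ := hz
      rw [Set.mem_singleton_iff] at hyx' hzx'
      set c₂ := Function.update c y (c x) with hc₂def
      have hc₂y : c₂ y = c x := Function.update_self y (c x) c
      have hc₂ne : ∀ v, v ≠ y → c₂ v = c v := fun v hv => Function.update_of_ne hv _ _
      have hzy : z ≠ y := hyz.symm
      have hc₂proper : ∀ u v, G.Adj u v → c₂ u ≠ c₂ v := by
        intro u v h
        by_cases hu : u = y <;> by_cases hv : v = y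
        · rw [hu, hv] at h; exact absurd h (G.irrefl)
        · rw [hu] at h ⊢
          rw [hc₂y, hc₂ne v hv]
          exact hc x v ((hAdj y hyX v).mp h)
        · rw [hv] at h ⊢
          rw [hc₂y, hc₂ne u hu]
          exact (hc x u ((hAdj y hyX u).mp h.symm)).symm
        · rw [hc₂ne u hu, hc₂ne v hv]; exact hc u v h
      have hc₂b : ∀ i : Fin k, ∃ v, c₂ v = i ∧
          ∀ j : Fin k, j ≠ i → ∃ u, G.Adj v u ∧ c₂ u = j := by
        intro i
        obtain ⟨v, hv, hw⟩ := hb i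
        by_cases hvy : v = y
        · rw [hvy] at hv hw
          refine ⟨z, by rw [hc₂ne z hzy, ← hcyz]; exact hv, ?_⟩
          intro j hj
          obtain ⟨u, hadj, hu⟩ := hw j hj
          have huy : u ≠ y := fun h => G.irrefl (h ▸ hadj)
          exact ⟨u, (hAdj z hzX u).mpr ((hAdj y hyX u).mp hadj),
            by rw [hc₂ne u huy]; exact hu⟩
        · refine ⟨v, by rw [hc₂ne v hvy]; exact hv, ?_⟩
          intro j hj
          obtain ⟨u, hadj, hu⟩ := hw j hj
          by_cases huy : u = y
          · rw [huy] at hadj hu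
            refine ⟨z, ?_, by rw [hc₂ne z hzy, ← hcyz]; exact hu⟩
            exact ((hAdj z hzX v).mpr ((hAdj y hyX v).mp hadj.symm)).symm
          · exact ⟨u, hadj, by rw [hc₂ne u huy]; exact hu⟩
      exact key c₂ hc₂proper hc₂b y hyX hyx'
        (by rw [hc₂y, hc₂ne x (Ne.symm hyx')])
  · rintro ⟨c, hc, hb⟩
    have hne : (X \ {x}).Nonempty := by
      rw [← Set.ncard_pos (Set.toFinite _)]
      have h1 := Set.ncard_diff_singleton_of_mem hx
      omega
    obtain ⟨y, hyX, hyx⟩ := hne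
    rw [Set.mem_singleton_iff] at hyx
    have hyc : y ∈ ({x}ᶜ : Set V) := Set.mem_compl_singleton_iff.mpr hyx
    let f : V → Fin k := fun v => if h : v = x then c ⟨y, hyc⟩
      else c ⟨v, Set.mem_compl_singleton_iff.mpr h⟩
    have hfx : f x = c ⟨y, hyc⟩ := dif_pos rfl
    have hfne : ∀ (v : V) (h : v ≠ x),
        f v = c ⟨v, Set.mem_compl_singleton_iff.mpr h⟩ := fun v h => dif_neg h
    refine ⟨f, ?_, ?_⟩
    · intro u v h
      by_cases hu : u = x <;> by_cases hv : v = x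
      · rw [hu, hv] at h; exact absurd h (G.irrefl)
      · rw [hu] at h ⊢
        rw [hfx, hfne v hv]
        have h1 : G.Adj y v := (hAdj y hyX v).mpr h
        exact hc ⟨y, hyc⟩ ⟨v, _⟩ (by simpa using h1)
      · rw [hv] at h ⊢
        rw [hfx, hfne u hu]
        have h1 : G.Adj y u := (hAdj y hyX u).mpr h.symm
        exact (hc ⟨y, hyc⟩ ⟨u, _⟩ (by simpa using h1)).symm
      · rw [hfne u hu, hfne v hv]
        exact hc ⟨u, _⟩ ⟨v, _⟩ (by simpa using h)
    · intro i
      obtain ⟨v, hv, hw⟩ := hb i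
      have hvx : (v : V) ≠ x := Set.mem_compl_singleton_iff.mp v.2
      refine ⟨↑v, by rw [hfne ↑v hvx]; exact hv, ?_⟩
      intro j hj
      obtain ⟨u, hadj, hu⟩ := hw j hj
      have hux : (u : V) ≠ x := Set.mem_compl_singleton_iff.mp u.2
      exact ⟨↑u, by simpa using hadj, by rw [hfne ↑u hux]; exact hu⟩
end
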